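/- Let k ≥ 1. Let S ∈ ℚ[[X]] be the formal power series S = ∑_{n≥0} X^{2n} / (4ⁿ · (2n+1)!) (the power series of sinh(X/2)/(X/2)). Since S has constant coefficient 1, it is a unit in ℚ[[X]]. Then the coefficient of X^{2k} in S^{-(2k+1)} equals (−1)^k · C(2k, k) / 16^k, where C(2k, k) is the binomial coefficient; in particular this coefficient is nonzero. (This coefficient is the Â-genus of the complex projective space ℂP^{2k}, whose non-vanishing is used in the proof of the main theorem.) -/

import Mathlib

/-- The formal power series `S = ∑_{n ≥ 0} X^{2n} / (4ⁿ · (2n+1)!) ∈ ℚ[[X]]`,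
i.e. the power series expansion of `sinh(X/2)/(X/2)`. -/
noncomputable def sinhHalfSeries : PowerSeries ℚ :=
  PowerSeries.mk fun m =>
    if m % 2 = 0 then 1 / (4 ^ (m / 2) * (Nat.factorial (m + 1) : ℚ)) else 0

namespace AhatAux

open PowerSeries

/-- The power series of `cosh(X/2)`. -/
noncomputable def coshHalfSeries : PowerSeries ℚ :=
  PowerSeries.mk fun m =>
    if m % 2 = 0 then 1 / (4 ^ (m / 2) * (Nat.factorial m : ℚ)) else 0

local notation "S" => sinhHalfSeries
local notation "G" => coshHalfSeries

noncomputable def T : PowerSeries ℚ := sinhHalfSeries⁻¹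

lemma cS : constantCoeff S = 1 := by
  simp [sinhHalfSeries, ← coeff_zero_eq_constantCoeff, coeff_mk]

lemma cG : constantCoeff G = 1 := by
  simp [coshHalfSeries, ← coeff_zero_eq_constantCoeff, coeff_mk]

lemma derivF : d⁄dX ℚ (X * S) = G := by
  ext n
  rw [coeff_derivative, coeff_succ_X_mul]
  simp only [sinhHalfSeries, coshHalfSeries, coeff_mk]
  split
  · rw [Nat.factorial_succ]
    push_cast
    have : (Nat.factorial n : ℚ) ≠ 0 := Nat.cast_ne_zero.mpr (Nat.factorial_ne_zero n)
    field_simp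
  · simp

lemma derivG : d⁄dX ℚ G = (1/4 : ℚ) • (X * S) := by
  ext n
  rw [coeff_derivative, map_smul]
  match n with
  | 0 => simp [coshHalfSeries, coeff_mk]
  | m + 1 =>
    rw [coeff_succ_X_mul]
    simp only [sinhHalfSeries, coshHalfSeries, coeff_mk]
    have h2 : (m + 1 + 1) % 2 = m % 2 := by omega
    rw [h2]
    split
    · next h =>
      have h3 : (m + 1 + 1) / 2 = m / 2 + 1 := by omega
      rw [h3, Nat.factorial_succ]
      have : (Nat.factorial (m+1) : ℚ) ≠ 0 := Nat.cast_ne_zero.mpr (Nat.factorial_ne_zero _)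
      push_cast
      field_simp
      ring_nf
      rw [add_comm 1 m, mul_inv_cancel₀ this, one_mul, ← mul_pow, inv_mul_cancel₀ (by norm_num : (4:ℚ) ≠ 0), one_pow]
    · simp

lemma pyth : (G:ℚ⟦X⟧) ^ 2 = 1 + (1/4 : ℚ) • (X * S) ^ 2 := by
  apply derivative.ext
  · rw [pow_two, pow_two, Derivation.leibniz, map_add, Derivation.map_one_eq_zero,
      Derivation.map_smul, Derivation.leibniz, derivF, derivG]
    simp only [smul_eq_mul, PowerSeries.smul_eq_C_mul]
    ring
  · simp [cG, pow_two, map_mul, PowerSeries.smul_eq_C_mul]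

lemma pyth' : (4:ℚ⟦X⟧) * G ^ 2 = 4 + X^2 * S^2 := by
  have h4 : ((C) (1/4) : ℚ⟦X⟧) * 4 = 1 := by
    rw [show (4:ℚ⟦X⟧) = C 4 from (map_ofNat (C) 4).symm, ← map_mul]; norm_num
  rw [pyth, PowerSeries.smul_eq_C_mul]
  linear_combination (X^2*S^2) * h4

lemma hST : S * T = 1 := PowerSeries.mul_inv_cancel S (by rw [cS]; norm_num)

lemma derivT : d⁄dX ℚ T = -T^2 * d⁄dX ℚ S := derivative_inv' S

lemma hG4 : (4:ℚ⟦X⟧) * d⁄dX ℚ G = X * S := by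
  rw [derivG, PowerSeries.smul_eq_C_mul, ← mul_assoc]
  have : (4:ℚ⟦X⟧) * C (1/4) = 1 := by
    rw [show (4:ℚ⟦X⟧) = C 4 from (map_ofNat (C) 4).symm, ← map_mul]; norm_num
  rw [this, one_mul]

lemma hXdS : X * d⁄dX ℚ S = G - S := by
  have := derivF
  rw [Derivation.leibniz, smul_eq_mul, smul_eq_mul, derivative_X, mul_one] at this
  linear_combination this

lemma key (m : ℕ) : (4:ℚ⟦X⟧) * (X * d⁄dX ℚ (G * T^(m+1))) =
    4*((m:ℚ⟦X⟧)+1) * (G*T^(m+1)) - 4*((m:ℚ⟦X⟧)+1) * T^(m+2) - (m:ℚ⟦X⟧) * (X^2*T^m) := by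
  rw [Derivation.leibniz, Derivation.leibniz_pow, derivT]
  simp only [smul_eq_mul, nsmul_eq_mul]
  push_cast
  linear_combination (4*((m:ℚ⟦X⟧)+1) * G * T^(m+1) - ((m:ℚ⟦X⟧)+1) * X^2 * T^m * (S*T+1) + X^2 * T^m) * hST
    + (-(((m:ℚ⟦X⟧))+1) * T^(m+2)) * pyth'
    + (-4*((m:ℚ⟦X⟧)+1) * G * T^(m+2)) * hXdS
    + (X * T^(m+1)) * hG4

lemma rec1 (j : ℕ) : coeff (2*j+2) (T^(2*j+3)) =
    (-(2*(j:ℚ)+1)/(8*((j:ℚ)+1))) * coeff (2*j) (T^(2*j+1)) := by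
  have e1 : ((2*j+1:ℕ):ℚ⟦X⟧) = C (2*(j:ℚ)+1) := by
    rw [← map_natCast (C) (2*j+1)]; congr 1; push_cast; ring
  have h := congrArg (coeff (2*j+2)) (key (2*j+1))
  have e3 : (C (2*(j:ℚ)+1) + 1 : ℚ⟦X⟧) = C (2*(j:ℚ)+2) := by
    rw [← map_one (C), ← map_add]; congr 1; ring
  simp only [e1, e3, show (4:ℚ⟦X⟧) = C (4:ℚ) from (map_ofNat _ 4).symm, ← map_mul,
    map_sub, coeff_C_mul] at h
  rw [show 2*j+2 = (2*j+1)+1 from rfl, coeff_succ_X_mul, coeff_derivative,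
    show 2*j+1+1 = 2*j+2 from rfl] at h
  rw [coeff_X_pow_mul (T^(2*j+1)) 2 (2*j)] at h
  rw [show (2*j+1)+2 = 2*j+3 from rfl] at h
  push_cast at h
  have hj : ((j:ℚ)+1) ≠ 0 := by positivity
  field_simp
  linear_combination h

lemma main (k : ℕ) : coeff (2*k) (T^(2*k+1)) =
    (-1:ℚ)^k * ((2*k).choose k : ℚ)/16^k := by
  induction k with
  | zero =>
    rw [show 2*0+1 = 1 by ring, pow_one, show 2*0 = 0 by ring]
    rw [T, coeff_zero_eq_constantCoeff, constantCoeff_inv, cS]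
    norm_num
  | succ k ih =>
    rw [show 2*(k+1) = 2*k+2 by ring, show 2*k+2+1 = 2*k+3 by omega, rec1 k, ih]
    have hc : ((k:ℚ)+1) * ((2*k+2).choose (k+1) : ℚ) = 2*(2*(k:ℚ)+1) * ((2*k).choose k : ℚ) := by
      have := Nat.succ_mul_centralBinom_succ k
      unfold Nat.centralBinom at this
      rw [show 2*(k+1) = 2*k+2 by ring] at this
      exact_mod_cast congrArg (Nat.cast : ℕ → ℚ) this
    have hj : ((k:ℚ)+1) ≠ 0 := by positivity
    have h16 : (16:ℚ)^k ≠ 0 := by positivity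
    field_simp
    ring_nf
    ring_nf at hc
    linear_combination (-(1:ℚ))^k * 8 * (16:ℚ)^k * hc

end AhatAux

/-- The series `S = ∑_{n≥0} X^{2n} / (4ⁿ (2n+1)!)` has constant
coefficient `1`, hence is a unit in `ℚ[[X]]`, and for `k ≥ 1` the coefficient of `X^{2k}` in
`S^{-(2k+1)}` equals `(-1)^k · C(2k, k) / 16^k`; in particular it is nonzero.  (This
coefficient is the Â-genus of the complex projective space `ℂP^{2k}`.) -/
theorem coeff_sinhHalfSeries_inv_pow (k : ℕ) (hk : 1 ≤ k) :
    PowerSeries.constantCoeff sinhHalfSeries = 1 ∧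
    IsUnit sinhHalfSeries ∧
    PowerSeries.coeff (2 * k) (sinhHalfSeries⁻¹ ^ (2 * k + 1)) =
      (-1 : ℚ) ^ k * (Nat.choose (2 * k) k : ℚ) / 16 ^ k ∧
    PowerSeries.coeff (2 * k) (sinhHalfSeries⁻¹ ^ (2 * k + 1)) ≠ 0 := by
  have hmain := AhatAux.main k
  rw [AhatAux.T] at hmain
  refine ⟨AhatAux.cS, ?_, hmain, ?_⟩
  · exact PowerSeries.isUnit_iff_constantCoeff.mpr (by rw [AhatAux.cS]; exact isUnit_one)
  · rw [hmain]
    have h1 : ((2*k).choose k : ℚ) ≠ 0 :=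
      Nat.cast_ne_zero.mpr (Nat.choose_pos (by omega)).ne'
    have h2 : (16:ℚ)^k ≠ 0 := by positivity
    have h3 : ((-1:ℚ))^k ≠ 0 := by
      simp [pow_ne_zero]
    positivity
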